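/- Let 0 → A → V → M → B → 0 be an exact sequence of modules over a ring with an endomorphism φ (commuting with the maps), where A and B are finite. Suppose ker(φ : A→A), coker(φ:A→A), ker(φ:B→B), coker(φ:B→B) satisfy |ker| = |coker| on A and on B, and suppose ker(φ) = 0 on both V and M with coker(φ:V→V) and coker(φ:M→M) finite. Then |coker(φ : V → V)| = |coker(φ : M → M)|. -/
import Mathlib


/-- Let `0 → A → V → M → B → 0` be an exact sequence of abelian groups equipped with a
compatible endomorphism `φ`, with `A` and `B` finite.  If `|ker φ| = |coker φ|` on `A`
and on `B`, and `φ` is injective on `V` and on `M` with finite cokernels there, then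
`|coker(φ : V → V)| = |coker(φ : M → M)|`. -/
theorem stmt11 {A V M B : Type*} [AddCommGroup A] [AddCommGroup V] [AddCommGroup M]
    [AddCommGroup B] [Finite A] [Finite B]
    (α : A →+ V) (β : V →+ M) (γ : M →+ B)
    (hα : Function.Injective α) (hexV : α.range = β.ker) (hexM : β.range = γ.ker)
    (hγ : Function.Surjective γ)
    (φA : A →+ A) (φV : V →+ V) (φM : M →+ M) (φB : B →+ B)
    (hcα : ∀ a : A, α (φA a) = φV (α a))
    (hcβ : ∀ v : V, β (φV v) = φM (β v))
    (hcγ : ∀ x : M, γ (φM x) = φB (γ x))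
    (hA : Nat.card φA.ker = Nat.card (A ⧸ φA.range))
    (hB : Nat.card φB.ker = Nat.card (B ⧸ φB.range))
    (hVinj : Function.Injective φV) (hMinj : Function.Injective φM)
    (hVfin : Finite (V ⧸ φV.range)) (hMfin : Finite (M ⧸ φM.range)) :
    Nat.card (V ⧸ φV.range) = Nat.card (M ⧸ φM.range) := by
  classical
  -- φA is injective, hence (A finite) surjective
  have hAinj : Function.Injective φA := by
    intro a a' h
    apply hα; apply hVinj
    rw [← hcα, ← hcα, h]
  have hAsurj : Function.Surjective φA := Finite.injective_iff_surjective.mp hAinj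
  -- elements killed by β lie in the range of φV
  have L1 : ∀ v : V, β v = 0 → v ∈ φV.range := by
    intro v hv
    have hv' : v ∈ β.ker := hv
    rw [← hexV] at hv'
    obtain ⟨a, rfl⟩ := hv'
    obtain ⟨a', rfl⟩ := hAsurj a
    exact ⟨α a', (hcα a').symm⟩
  have hle : φV.range ≤ AddSubgroup.comap β φM.range := by
    rintro v ⟨u, rfl⟩
    exact ⟨β u, (hcβ u).symm⟩
  -- range β = ker γ, pointwise
  have hker : ∀ m : M, γ m = 0 → ∃ u : V, β u = m := by
    intro m hm
    have : m ∈ γ.ker := hm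
    rw [← hexM] at this
    exact this
  -- the induced map on cokernels
  set S := φV.range with hS
  set R := φM.range with hR
  let βbar : V ⧸ S →+ M ⧸ R := QuotientAddGroup.map S R β hle
  have βbar_mk : ∀ v : V, βbar (QuotientAddGroup.mk v) = QuotientAddGroup.mk (β v) :=
    fun v => rfl
  -- key well-definedness lemma
  have L2 : ∀ (m m' : M) (v v' : V), γ m = γ m' → β v = φM m → β v' = φM m' →
      v - v' ∈ S := by
    intro m m' v v' hmm hv hv'
    have h1 : γ (m - m') = 0 := by rw [map_sub, hmm, sub_self]
    obtain ⟨u, hu⟩ := hker _ h1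
    have h2 : β (v - v' - φV u) = 0 := by
      rw [map_sub, map_sub, hv, hv', hcβ, hu, map_sub]; abel
    obtain ⟨w, hw⟩ := L1 _ h2
    exact ⟨w + u, by rw [map_add, hw]; abel⟩
  -- construct a bijection φB.ker → βbar.ker
  have exm : ∀ b : φB.ker, ∃ p : V × M, γ p.2 = (b : B) ∧ β p.1 = φM p.2 := by
    intro b
    obtain ⟨m, hm⟩ := hγ (b : B)
    have h1 : γ (φM m) = 0 := by rw [hcγ, hm]; exact b.2
    obtain ⟨v, hv⟩ := hker _ h1
    exact ⟨⟨v, m⟩, hm, hv⟩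
  have mem : ∀ b : φB.ker, (QuotientAddGroup.mk (exm b).choose.1 : V ⧸ S) ∈ βbar.ker := by
    intro b
    obtain ⟨hm, hv⟩ := (exm b).choose_spec
    have : βbar (QuotientAddGroup.mk (exm b).choose.1)
        = QuotientAddGroup.mk (β (exm b).choose.1) := rfl
    rw [AddMonoidHom.mem_ker, this, hv]
    exact (QuotientAddGroup.eq_zero_iff _).mpr ⟨(exm b).choose.2, rfl⟩
  let f : φB.ker → βbar.ker := fun b => ⟨QuotientAddGroup.mk (exm b).choose.1, mem b⟩
  have hfbij : Function.Bijective f := by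
    constructor
    · intro b₁ b₂ h
      obtain ⟨hm₁, hv₁⟩ := (exm b₁).choose_spec
      obtain ⟨hm₂, hv₂⟩ := (exm b₂).choose_spec
      have h' : ((exm b₁).choose.1 : V ⧸ S) = ((exm b₂).choose.1 : V ⧸ S) :=
        congrArg Subtype.val h
      have hsub : (exm b₁).choose.1 - (exm b₂).choose.1 ∈ S :=
        (QuotientAddGroup.eq_zero_iff _).mp (by
          rw [QuotientAddGroup.mk_sub, h', sub_self])
      obtain ⟨u, hu⟩ := hsub
      have h2 : φM ((exm b₁).choose.2 - (exm b₂).choose.2) = φM (β u) := by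
        rw [map_sub, ← hv₁, ← hv₂, ← map_sub, ← hu, hcβ]
      have h3 : (exm b₁).choose.2 - (exm b₂).choose.2 = β u := hMinj h2
      have h4 : γ ((exm b₁).choose.2 - (exm b₂).choose.2) = 0 := by
        rw [h3]
        have : (β u) ∈ γ.ker := by rw [← hexM]; exact ⟨u, rfl⟩
        exact this
      have h5 : (b₁ : B) = (b₂ : B) := by
        rw [← hm₁, ← hm₂, ← sub_eq_zero, ← map_sub, h4]
      exact Subtype.ext h5
    · rintro ⟨x, hx⟩
      obtain ⟨v, rfl⟩ := QuotientAddGroup.mk_surjective x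
      have hx' : (QuotientAddGroup.mk (β v) : M ⧸ R) = 0 := hx
      obtain ⟨m, hm⟩ : β v ∈ R := (QuotientAddGroup.eq_zero_iff _).mp hx'
      have hbker : φB (γ m) = 0 := by
        rw [← hcγ, hm]
        have : (β v) ∈ γ.ker := by rw [← hexM]; exact ⟨v, rfl⟩
        exact this
      refine ⟨⟨γ m, hbker⟩, ?_⟩
      obtain ⟨hm', hv'⟩ := (exm ⟨γ m, hbker⟩).choose_spec
      apply Subtype.ext
      show (QuotientAddGroup.mk (exm ⟨γ m, hbker⟩).choose.1 : V ⧸ S) = QuotientAddGroup.mk v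
      have := L2 _ m _ v hm' hv' hm.symm
      rw [← sub_eq_zero, ← QuotientAddGroup.mk_sub]
      exact (QuotientAddGroup.eq_zero_iff _).mpr this
  have c4 : Nat.card φB.ker = Nat.card βbar.ker := Nat.card_eq_of_bijective f hfbij
  -- cokernel comparison
  let q1 : M →+ B ⧸ φB.range := (QuotientAddGroup.mk' φB.range).comp γ
  let q2 : M →+ (M ⧸ R) ⧸ βbar.range :=
    (QuotientAddGroup.mk' βbar.range).comp (QuotientAddGroup.mk' R)
  have hq1 : Function.Surjective q1 :=
    (QuotientAddGroup.mk'_surjective _).comp hγ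
  have hq2 : Function.Surjective q2 :=
    (QuotientAddGroup.mk'_surjective _).comp (QuotientAddGroup.mk'_surjective _)
  have hkereq : q1.ker = q2.ker := by
    ext m
    constructor
    · intro hm
      have hm' : γ m ∈ φB.range := (QuotientAddGroup.eq_zero_iff _).mp hm
      obtain ⟨b, hb⟩ := hm'
      obtain ⟨m'', hm''⟩ := hγ b
      have h1 : γ (m - φM m'') = 0 := by
        rw [map_sub, hcγ, hm'', hb, sub_self]
      obtain ⟨v, hv⟩ := hker _ h1
      have : (QuotientAddGroup.mk m : M ⧸ R) ∈ βbar.range := by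
        refine ⟨QuotientAddGroup.mk v, ?_⟩
        rw [βbar_mk, hv, QuotientAddGroup.mk_sub]
        have : (QuotientAddGroup.mk (φM m'') : M ⧸ R) = 0 :=
          (QuotientAddGroup.eq_zero_iff _).mpr ⟨m'', rfl⟩
        rw [this, sub_zero]
      exact (QuotientAddGroup.eq_zero_iff _).mpr this
    · intro hm
      have hm' : (QuotientAddGroup.mk m : M ⧸ R) ∈ βbar.range :=
        (QuotientAddGroup.eq_zero_iff _).mp hm
      obtain ⟨x, hx⟩ := hm'
      obtain ⟨v, rfl⟩ := QuotientAddGroup.mk_surjective x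
      rw [βbar_mk] at hx
      have hsub : β v - m ∈ R := by
        have : (QuotientAddGroup.mk (β v - m) : M ⧸ R) = 0 := by
          rw [QuotientAddGroup.mk_sub, hx, sub_self]
        exact (QuotientAddGroup.eq_zero_iff _).mp this
      obtain ⟨m', hm'⟩ := hsub
      have : γ m ∈ φB.range := by
        refine ⟨-γ m', ?_⟩
        have hβv : γ (β v) = 0 := by
          have : (β v) ∈ γ.ker := by rw [← hexM]; exact ⟨v, rfl⟩
          exact this
        rw [map_neg, ← hcγ, hm', map_sub, hβv, zero_sub, neg_neg]
      exact (QuotientAddGroup.eq_zero_iff _).mpr this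
  have c5 : Nat.card (B ⧸ φB.range) = Nat.card ((M ⧸ R) ⧸ βbar.range) := by
    rw [← Nat.card_congr (QuotientAddGroup.quotientKerEquivOfSurjective q1 hq1).toEquiv,
      ← Nat.card_congr (QuotientAddGroup.quotientKerEquivOfSurjective q2 hq2).toEquiv,
      hkereq]
  have c1 : Nat.card (V ⧸ S) = Nat.card ((V ⧸ S) ⧸ βbar.ker) * Nat.card βbar.ker :=
    AddSubgroup.card_eq_card_quotient_mul_card_addSubgroup _
  have c2 : Nat.card (M ⧸ R) = Nat.card ((M ⧸ R) ⧸ βbar.range) * Nat.card βbar.range :=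
    AddSubgroup.card_eq_card_quotient_mul_card_addSubgroup _
  have c3 : Nat.card ((V ⧸ S) ⧸ βbar.ker) = Nat.card βbar.range :=
    Nat.card_congr (QuotientAddGroup.quotientKerEquivRange βbar).toEquiv
  rw [c1, c2, c3, ← c4, hB, c5, mul_comm]
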